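/- Let c : ℕ → ℂ be a sequence with c(0) = c(1) = 0 such that Σ_{n≥2} |c(n)| n^{−σ} < ∞ for every real σ > 1. Then for every complex number z with Im z > 1/2, setting s = 1/2 − iz, one has ∫₀^∞ ( Σ_{2 ≤ n ≤ e^t} (c(n)/√n)(t − log n) ) e^{izt} dt = −(1/z²) Σ_{n≥2} c(n) n^{−s}. -/

import Mathlib

open MeasureTheory

section AuxLemmas
open Set Filter Topology

lemma expDeriv (b t : ℝ) : HasDerivAt (fun t : ℝ => Real.exp (-b * t)) (-b * Real.exp (-b * t)) t := by
  simpa [mul_comm] using ((hasDerivAt_id t).const_mul (-b)).exp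

lemma tendsto_texp {b : ℝ} (hb : 0 < b) :
    Tendsto (fun t : ℝ => t * Real.exp (-b * t)) atTop (𝓝 0) := by
  have := tendsto_rpow_mul_exp_neg_mul_atTop_nhds_zero 1 b hb
  refine this.congr' ?_
  filter_upwards [eventually_gt_atTop 0] with t ht
  rw [Real.rpow_one]

lemma tendsto_exp' {b : ℝ} (hb : 0 < b) :
    Tendsto (fun t : ℝ => Real.exp (-b * t)) atTop (𝓝 0) := by
  have h : Tendsto (fun t : ℝ => -b * t) atTop atBot :=
    Tendsto.const_mul_atTop_of_neg (neg_neg_iff_pos.mpr hb) tendsto_id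
  exact Real.tendsto_exp_atBot.comp h

lemma tendsto_subexp {b : ℝ} (hb : 0 < b) (L : ℝ) :
    Tendsto (fun t : ℝ => (t - L) * Real.exp (-b * t)) atTop (𝓝 0) := by
  have := (tendsto_texp hb).sub ((tendsto_exp' hb).const_mul L)
  simp only [sub_zero, mul_zero, sub_self] at this
  simpa using this.congr (fun t => by ring)

lemma FderivB {b : ℝ} (hb : 0 < b) (L t : ℝ) :
    HasDerivAt (fun t : ℝ => -Real.exp (-b * t) * ((t - L) / b + 1 / b ^ 2))
      ((t - L) * Real.exp (-b * t)) t := by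
  have h1 : HasDerivAt (fun t : ℝ => -Real.exp (-b * t)) (b * Real.exp (-b * t)) t := by
    simpa using (expDeriv b t).fun_neg
  have h2 : HasDerivAt (fun t : ℝ => (t - L) / b + 1 / b ^ 2) (1 / b) t := by
    have := (((hasDerivAt_id t).sub_const L).div_const b).add_const (1 / b ^ 2)
    simpa [one_div] using this
  have := h1.fun_mul h2
  refine this.congr_deriv ?_
  field_simp
  ring

lemma tendstoB {b : ℝ} (hb : 0 < b) (L : ℝ) :
    Tendsto (fun t : ℝ => -Real.exp (-b * t) * ((t - L) / b + 1 / b ^ 2)) atTop (𝓝 0) := by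
  have : Tendsto (fun t : ℝ => -((1 / b) * (t * Real.exp (-b * t)) +
      (-L / b + 1 / b ^ 2) * Real.exp (-b * t))) atTop (𝓝 (-((1 / b) * 0 + (-L / b + 1 / b ^ 2) * 0))) :=
    (((tendsto_texp hb).const_mul _).add ((tendsto_exp' hb).const_mul _)).neg
  simpa using this.congr (fun t => by field_simp; ring)

lemma lemB {b : ℝ} (hb : 0 < b) (L : ℝ) :
    IntegrableOn (fun t : ℝ => (t - L) * Real.exp (-b * t)) (Ioi L) ∧
      ∫ t in Ioi L, (t - L) * Real.exp (-b * t) = Real.exp (-b * L) / b ^ 2 := by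
  have hderiv : ∀ t ∈ Ioi L, HasDerivAt (fun t : ℝ => -Real.exp (-b * t) * ((t - L) / b + 1 / b ^ 2))
      ((t - L) * Real.exp (-b * t)) t := fun t _ => FderivB hb L t
  have hcont : ContinuousWithinAt (fun t : ℝ => -Real.exp (-b * t) * ((t - L) / b + 1 / b ^ 2)) (Ici L) L :=
    (FderivB hb L L).continuousAt.continuousWithinAt
  have hpos : ∀ t ∈ Ioi L, 0 ≤ (t - L) * Real.exp (-b * t) := fun t ht =>
    mul_nonneg (by linarith [mem_Ioi.mp ht]) (Real.exp_nonneg _)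
  refine ⟨integrableOn_Ioi_deriv_of_nonneg hcont hderiv hpos (tendstoB hb L), ?_⟩
  rw [integral_Ioi_of_hasDerivAt_of_nonneg hcont hderiv hpos (tendstoB hb L)]
  field_simp
  ring

lemma normCalc (w : ℂ) (L t : ℝ) :
    ‖((t : ℂ) - (L : ℂ)) * Complex.exp (w * t)‖ = |t - L| * Real.exp (w.re * t) := by
  rw [norm_mul, Complex.norm_exp]
  congr 1
  · rw [← Complex.ofReal_sub, Complex.norm_real, Real.norm_eq_abs]
  · congr 1
    simp [Complex.mul_re]

lemma lemA {w : ℂ} (hw : w.re < 0) (L : ℝ) :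
    IntegrableOn (fun t : ℝ => ((t : ℂ) - (L : ℂ)) * Complex.exp (w * t)) (Ioi L) ∧
      ∫ t in Ioi L, ((t : ℂ) - (L : ℂ)) * Complex.exp (w * t) = Complex.exp (w * L) / w ^ 2 := by
  have hb : 0 < -w.re := by linarith
  have hw0 : w ≠ 0 := fun h => by simp [h] at hw
  have hint : IntegrableOn (fun t : ℝ => ((t : ℂ) - (L : ℂ)) * Complex.exp (w * t)) (Ioi L) := by
    refine Integrable.mono' (lemB hb L).1 ?_ ?_
    · apply Continuous.aestronglyMeasurable
      continuity
    · filter_upwards [ae_restrict_mem measurableSet_Ioi] with t ht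
      rw [normCalc]
      have : |t - L| = t - L := abs_of_nonneg (by linarith [mem_Ioi.mp ht])
      rw [this]
      apply le_of_eq
      congr 1
      ring_nf
  refine ⟨hint, ?_⟩
  set F : ℝ → ℂ := fun t => Complex.exp (w * t) * (((t : ℂ) - L) / w - 1 / w ^ 2) with hF
  have hderiv : ∀ t : ℝ, HasDerivAt F (((t : ℂ) - (L : ℂ)) * Complex.exp (w * t)) t := by
    intro t
    have hG : HasDerivAt (fun ζ : ℂ => Complex.exp (w * ζ) * ((ζ - L) / w - 1 / w ^ 2))
        (((t : ℂ) - L) * Complex.exp (w * t)) (t : ℂ) := by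
      have h1 : HasDerivAt (fun ζ : ℂ => Complex.exp (w * ζ)) (w * Complex.exp (w * (t:ℂ))) (t:ℂ) := by
        simpa [mul_comm] using ((hasDerivAt_id (t:ℂ)).const_mul w).cexp
      have h2 : HasDerivAt (fun ζ : ℂ => (ζ - (L:ℂ)) / w - 1 / w ^ 2) (1 / w) (t:ℂ) := by
        have h := (((hasDerivAt_id (t:ℂ)).sub_const (L:ℂ)).div_const w).sub_const (1 / w ^ 2)
        exact h
      have := h1.fun_mul h2
      refine this.congr_deriv ?_
      field_simp
      ring
    exact hG.comp_ofReal
  have hexp : Tendsto (fun t : ℝ => Complex.exp (w * t)) atTop (𝓝 0) := by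
    refine squeeze_zero_norm (fun t => ?_) (tendsto_exp' hb)
    rw [Complex.norm_exp]
    apply le_of_eq
    congr 1
    simp [Complex.mul_re]
  have h1 : Tendsto (fun t : ℝ => ((t : ℂ) - L) * Complex.exp (w * t)) atTop (𝓝 0) := by
    apply squeeze_zero_norm' ?_ (tendsto_subexp hb L)
    filter_upwards [eventually_ge_atTop L] with t ht
    rw [normCalc, abs_of_nonneg (by linarith)]
    apply le_of_eq; congr 1; ring_nf
  have htend : Tendsto F atTop (𝓝 0) := by
    have : Tendsto (fun t : ℝ => (1 / w) * (((t : ℂ) - L) * Complex.exp (w * t)) -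
        (1 / w ^ 2) * Complex.exp (w * t)) atTop (𝓝 ((1 / w) * 0 - (1 / w ^ 2) * 0)) :=
      (h1.const_mul _).sub (hexp.const_mul _)
    simp only [mul_zero, sub_zero, sub_self] at this
    refine this.congr (fun t => ?_)
    rw [hF]
    field_simp
  have := integral_Ioi_of_hasDerivAt_of_tendsto
    (hderiv L).continuousAt.continuousWithinAt (fun x _ => hderiv x) hint htend
  rw [this, hF]
  simp only [sub_self, Complex.ofReal_sub]
  ring_nf

end AuxLemmas

/-- For `c : ℕ → ℂ` with `c 0 = c 1 = 0` and
`Σ_{n≥2} |c(n)| n^{−σ} < ∞` for every real `σ > 1`, and every `z` with `Im z > 1/2`,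
setting `s = 1/2 − iz`,
`∫₀^∞ ( Σ_{2 ≤ n ≤ e^t} (c(n)/√n)(t − log n) ) e^{izt} dt = −(1/z²) Σ_{n≥2} c(n) n^{−s}`,
where `n^{−s} = exp(−s log n)`. -/
theorem integral_dirichlet_sum (c : ℕ → ℂ) (hc0 : c 0 = 0) (hc1 : c 1 = 0)
    (hc : ∀ σ : ℝ, 1 < σ → Summable fun n : ℕ => ‖c n‖ / (n : ℝ) ^ σ)
    (z : ℂ) (hz : 1 / 2 < z.im) (s : ℂ) (hs : s = 1 / 2 - Complex.I * z) :
    (∫ t in Set.Ioi (0 : ℝ),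
        (∑ n ∈ Finset.Icc 2 ⌊Real.exp t⌋₊,
            (c n / (Real.sqrt n : ℂ)) * ((t : ℂ) - Real.log n)) *
          Complex.exp (Complex.I * z * t))
      = -(1 / z ^ 2) * ∑' n : ℕ, c n * Complex.exp (-s * Real.log n) := by
  have hz0 : z ≠ 0 := by intro h; rw [h] at hz; norm_num at hz
  set w : ℂ := Complex.I * z with hw
  have hwre : w.re = -z.im := by simp [hw, Complex.mul_re]
  have hwlt : w.re < 0 := by rw [hwre]; linarith
  set b : ℝ := z.im with hbdef
  have hb0 : (0:ℝ) < b := by rw [hbdef]; linarith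
  set σ : ℝ := z.im + 1/2 with hσdef
  have hσ : 1 < σ := by rw [hσdef]; linarith
  set f : ℕ → ℝ → ℂ := fun n => (Set.Ici (Real.log n)).indicator
      (fun t : ℝ => (c n / (Real.sqrt n : ℂ)) *
        (((t:ℂ) - Real.log n) * Complex.exp (w * t))) with hfdef
  have hcsmall : ∀ n : ℕ, n < 2 → c n = 0 := by
    intro n hn; interval_cases n <;> assumption
  have hfsmall : ∀ n : ℕ, n < 2 → f n = 0 := by
    intro n hn; funext t; simp [hfdef, hcsmall n hn]
  -- pointwise identity
  have key : ∀ t ∈ Set.Ioi (0:ℝ),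
      (∑ n ∈ Finset.Icc 2 ⌊Real.exp t⌋₊, (c n / (Real.sqrt n : ℂ)) * ((t : ℂ) - Real.log n)) *
        Complex.exp (w * t) = ∑' n, f n t := by
    intro t _
    rw [Finset.sum_mul, tsum_eq_sum (s := Finset.Icc 2 ⌊Real.exp t⌋₊) ?_]
    · refine Finset.sum_congr rfl (fun n hn => ?_)
      rw [Finset.mem_Icc] at hn
      have hle : (n : ℝ) ≤ Real.exp t := (Nat.le_floor_iff (Real.exp_nonneg t)).mp hn.2
      have hn0 : (0:ℝ) < n := by
        have : (2:ℕ) ≤ n := hn.1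
        exact_mod_cast Nat.lt_of_lt_of_le two_pos this
      have hlog : Real.log n ≤ t := (Real.log_le_iff_le_exp hn0).mpr hle
      rw [hfdef]
      simp only [Set.indicator_of_mem (Set.mem_Ici.mpr hlog)]
      ring
    · intro n hn
      by_cases hsmall : n < 2
      · simp [hfsmall n hsmall]
      · push_neg at hsmall
        rw [Finset.mem_Icc, not_and_or] at hn
        rcases hn with h | h
        · exact absurd hsmall h
        · push_neg at h
          have hexp : Real.exp t < n := (Nat.floor_lt (Real.exp_nonneg t)).mp h
          have hn0 : (0:ℝ) < n := by exact_mod_cast Nat.lt_of_lt_of_le two_pos hsmall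
          have htlt : t < Real.log n := (Real.lt_log_iff_exp_lt hn0).mpr hexp
          rw [hfdef]
          exact Set.indicator_of_notMem (by simp [Set.mem_Ici]; linarith) _
  -- integrability
  have hFint : ∀ n : ℕ, Integrable (f n) (volume.restrict (Set.Ioi (0:ℝ))) := by
    intro n
    rw [hfdef, integrable_indicator_iff measurableSet_Ici]
    have h1 : IntegrableOn (fun t : ℝ => (c n / (Real.sqrt n : ℂ)) *
        (((t:ℂ) - Real.log n) * Complex.exp (w * t))) (Set.Ioi (Real.log n)) volume :=
      (lemA hwlt (Real.log n)).1.const_mul _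
    have h2 : IntegrableOn (fun t : ℝ => (c n / (Real.sqrt n : ℂ)) *
        (((t:ℂ) - Real.log n) * Complex.exp (w * t))) (Set.Ici (Real.log n)) volume := by
      rwa [integrableOn_Ici_iff_integrableOn_Ioi]
    rw [IntegrableOn, Measure.restrict_restrict measurableSet_Ici]
    exact h2.mono_set Set.inter_subset_left
  -- value of the integral
  have hval : ∀ n : ℕ, (∫ t in Set.Ioi (0:ℝ), f n t) =
      (c n / (Real.sqrt n : ℂ)) * (Complex.exp (w * Real.log n) / w ^ 2) := by
    intro n
    by_cases hsmall : n < 2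
    · simp [hfsmall n hsmall, hcsmall n hsmall]
    · push_neg at hsmall
      have hn1 : (1:ℝ) < n := by exact_mod_cast hsmall
      have hL : 0 < Real.log n := Real.log_pos hn1
      have hinter : Set.Ici (Real.log n) ∩ Set.Ioi (0:ℝ) = Set.Ici (Real.log n) :=
        Set.inter_eq_left.mpr (fun x hx => lt_of_lt_of_le hL hx)
      rw [hfdef]
      rw [integral_indicator measurableSet_Ici, Measure.restrict_restrict measurableSet_Ici,
        hinter, integral_Ici_eq_integral_Ioi, integral_const_mul, (lemA hwlt (Real.log n)).2]
  -- norm of the integral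
  have hnorm : ∀ n : ℕ, (∫ t in Set.Ioi (0:ℝ), ‖f n t‖) = (1 / b^2) * (‖c n‖ / (n:ℝ) ^ σ) := by
    intro n
    by_cases hsmall : n < 2
    · simp [hfsmall n hsmall, hcsmall n hsmall]
    · push_neg at hsmall
      have hn1 : (1:ℝ) < n := by exact_mod_cast hsmall
      have hn0 : (0:ℝ) < n := by linarith
      have hL : 0 < Real.log n := Real.log_pos hn1
      have hinter : Set.Ici (Real.log n) ∩ Set.Ioi (0:ℝ) = Set.Ici (Real.log n) :=
        Set.inter_eq_left.mpr (fun x hx => lt_of_lt_of_le hL hx)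
      have hnormpt : ∀ t : ℝ, ‖f n t‖ = (Set.Ici (Real.log n)).indicator
          (fun t => (‖c n‖ / Real.sqrt n) * (|t - Real.log n| * Real.exp (-b * t))) t := by
        intro t
        rw [hfdef]
        rw [norm_indicator_eq_indicator_norm]
        congr 1
        funext u
        rw [norm_mul, normCalc, hwre, norm_div, Complex.norm_real, Real.norm_eq_abs,
          abs_of_nonneg (Real.sqrt_nonneg _)]
      simp_rw [hnormpt]
      rw [integral_indicator measurableSet_Ici, Measure.restrict_restrict measurableSet_Ici,
        hinter, integral_Ici_eq_integral_Ioi, integral_const_mul]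
      have : ∫ t in Set.Ioi (Real.log n), |t - Real.log n| * Real.exp (-b * t)
          = ∫ t in Set.Ioi (Real.log n), (t - Real.log n) * Real.exp (-b * t) := by
        refine setIntegral_congr_fun measurableSet_Ioi (fun t ht => ?_)
        rw [abs_of_nonneg (by linarith [Set.mem_Ioi.mp ht])]
      rw [this, (lemB hb0 (Real.log n)).2]
      have h1 : Real.exp (-b * Real.log n) = (n:ℝ) ^ (-b) := by
        rw [Real.rpow_def_of_pos hn0]; ring_nf
      have h2 : Real.sqrt (n:ℝ) = (n:ℝ) ^ ((1:ℝ)/2) := Real.sqrt_eq_rpow _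
      rw [h1, h2, hσdef, ← hbdef]
      rw [Real.rpow_add hn0, Real.rpow_neg hn0.le]
      have hb2 : ((n:ℝ) ^ b) ≠ 0 := (Real.rpow_pos_of_pos hn0 b).ne'
      have hhalf : ((n:ℝ) ^ ((1:ℝ)/2)) ≠ 0 := (Real.rpow_pos_of_pos hn0 _).ne'
      field_simp
  -- summability of norms
  have hsum : Summable (fun n : ℕ => ∫ t in Set.Ioi (0:ℝ), ‖f n t‖) :=
    Summable.congr ((hc σ hσ).mul_left (1 / b^2)) (fun n => (hnorm n).symm)
  -- per-term final identity
  have hterm : ∀ n : ℕ, (c n / (Real.sqrt n : ℂ)) * (Complex.exp (w * Real.log n) / w ^ 2) =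
      -(1 / z ^ 2) * (c n * Complex.exp (-s * Real.log n)) := by
    intro n
    rcases Nat.eq_zero_or_pos n with rfl | hn
    · simp [hc0]
    · have hn0 : (0:ℝ) < n := by exact_mod_cast hn
      have hsqrt : (Real.sqrt (n:ℝ) : ℂ) = Complex.exp ((Real.log n : ℂ) / 2) := by
        have : Real.sqrt (n:ℝ) = Real.exp (Real.log n / 2) := by
          rw [Real.sqrt_eq_rpow, Real.rpow_def_of_pos hn0]; ring_nf
        rw [this, Complex.ofReal_exp]
        norm_num
      have hexp : -s * (Real.log n : ℂ) = w * Real.log n - (Real.log n : ℂ) / 2 := by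
        rw [hs, hw]; ring
      have hw2 : w ^ 2 = -(z^2) := by
        rw [hw, mul_pow, Complex.I_sq]; ring
      rw [hsqrt, hexp, Complex.exp_sub, hw2]
      have he : Complex.exp ((Real.log n : ℂ) / 2) ≠ 0 := Complex.exp_ne_zero _
      field_simp
  -- assemble
  calc (∫ t in Set.Ioi (0:ℝ),
        (∑ n ∈ Finset.Icc 2 ⌊Real.exp t⌋₊,
            (c n / (Real.sqrt n : ℂ)) * ((t : ℂ) - Real.log n)) * Complex.exp (w * t))
      = ∫ t in Set.Ioi (0:ℝ), ∑' n, f n t := setIntegral_congr_fun measurableSet_Ioi key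
    _ = ∑' n, ∫ t in Set.Ioi (0:ℝ), f n t :=
        (integral_tsum_of_summable_integral_norm hFint hsum).symm
    _ = ∑' n : ℕ, -(1 / z ^ 2) * (c n * Complex.exp (-s * Real.log n)) :=
        tsum_congr (fun n => (hval n).trans (hterm n))
    _ = -(1 / z ^ 2) * ∑' n : ℕ, c n * Complex.exp (-s * Real.log n) := tsum_mul_left
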